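/- Let G be a simple graph on a vertex type V, let φ', φ : Sym2 V → Fin K be two classifications of edges such that φ'(e) ≤ φ(e) for every edge e of G, and let w be a walk in G containing at least one edge e₀ with φ'(e₀) < φ(e₀). Then the class-count vector of w under φ' is strictly smaller than that under φ in the colex order: θ_{φ'}(w) <_colex θ_φ(w). -/

import Mathlib

open scoped NNReal

/-- The colexicographic strict order on `Fin K → ℕ`. -/
def ColexLt {K : ℕ} (a b : Fin K → ℕ) : Prop :=
  ∃ k, a k < b k ∧ ∀ j, k < j → a j = b j

/-- The colexicographic order: `a ≤_colex b` iff `a <_colex b` or `a = b`. -/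
def ColexLe {K : ℕ} (a b : Fin K → ℕ) : Prop :=
  ColexLt a b ∨ a = b

/-- The class-count vector of a walk: `theta G φ w k` is the number of edges of `w`
(with multiplicity) whose class under `φ` is `k`. -/
def theta {V : Type*} {K : ℕ} (G : SimpleGraph V) (φ : Sym2 V → Fin K)
    {s g : V} (w : G.Walk s g) : Fin K → ℕ :=
  fun k => w.edges.countP (fun e => decide (φ e = k))

/-- The total weight of a walk: the sum of `c` over its edges (with multiplicity). -/
def weight {V : Type*} (G : SimpleGraph V) (c : Sym2 V → ℝ≥0)
    {s g : V} (w : G.Walk s g) : ℝ≥0 :=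
  (w.edges.map c).sum

/-- The largest class `k` with `theta G φ w k > 0`, for a walk with at least one edge. -/
def maxClass {V : Type*} {K : ℕ} (G : SimpleGraph V) (φ : Sym2 V → Fin K)
    {s g : V} (w : G.Walk s g) (hw : w.edges ≠ []) : Fin K :=
  (Finset.univ.filter fun k => 0 < theta G φ w k).max' (by
    obtain ⟨e, he⟩ := List.exists_mem_of_ne_nil w.edges hw
    refine ⟨φ e, ?_⟩
    simp only [Finset.mem_filter, Finset.mem_univ, true_and, theta]
    exact Finset.mem_filter.mpr ⟨Finset.mem_univ _,
      (List.countP_pos_iff (p := fun e' => decide (φ e' = φ e))).mpr ⟨e, he, by simp⟩⟩)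

/-- A walk between distinct vertices has at least one edge. -/
theorem edges_ne_nil_of_ne {V : Type*} {G : SimpleGraph V} {s g : V}
    (h : s ≠ g) (w : G.Walk s g) : w.edges ≠ [] := by
  cases w with
  | nil => exact absurd rfl h
  | cons h' p => simp

/-- Lexicographic order on pairs `(maxClass, count)`. -/
def PairLe {K : ℕ} (p q : Fin K × ℕ) : Prop :=
  p.1 < q.1 ∨ (p.1 = q.1 ∧ p.2 ≤ q.2)

/-- Lexicographic order on keys `(class-count vector, weight)`:
first the colex order on the vectors, then the usual order on weights. -/
def KeyLe {K : ℕ} (p q : (Fin K → ℕ) × ℝ≥0) : Prop :=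
  ColexLt p.1 q.1 ∨ (p.1 = q.1 ∧ p.2 ≤ q.2)

/-- If `φ'` is pointwise at most `φ` on the edges of `G`, and a walk `w` contains an edge
`e₀` with `φ' e₀ < φ e₀`, then the class-count vector of `w` under `φ'` is strictly
smaller than that under `φ` in the colex order. -/
theorem theta_strict_mono_colexLt {V : Type*} {K : ℕ}
    (G : SimpleGraph V) (φ' φ : Sym2 V → Fin K)
    (h : ∀ e ∈ G.edgeSet, φ' e ≤ φ e) {s g : V} (w : G.Walk s g)
    (e₀ : Sym2 V) (he₀ : e₀ ∈ w.edges) (hlt : φ' e₀ < φ e₀) :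
    ColexLt (theta G φ' w) (theta G φ w) := by
  classical
  have hsub : ∀ e ∈ w.edges, φ' e ≤ φ e := fun e he => h e (w.edges_subset_edgeSet he)
  set T : Finset (Fin K) :=
    ((w.edges.filter (fun e => decide (φ' e < φ e))).toFinset).image φ with hT
  have hne : T.Nonempty := ⟨φ e₀, Finset.mem_image.mpr
    ⟨e₀, List.mem_toFinset.mpr (List.mem_filter.mpr ⟨he₀, by simpa using hlt⟩), rfl⟩⟩
  set k := T.max' hne with hk
  have hmaxle : ∀ e ∈ w.edges, φ' e < φ e → φ e ≤ k := by
    intro e he hlt'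
    exact T.le_max' _ (Finset.mem_image.mpr
      ⟨e, List.mem_toFinset.mpr (List.mem_filter.mpr ⟨he, by simpa using hlt'⟩), rfl⟩)
  obtain ⟨e₁, he₁m, hke⟩ := Finset.mem_image.mp (T.max'_mem hne)
  rw [List.mem_toFinset, List.mem_filter] at he₁m
  obtain ⟨he₁, hlt₁⟩ := he₁m
  have hlt₁ : φ' e₁ < φ e₁ := by simpa using hlt₁
  refine ⟨k, ?_, ?_⟩
  · -- strict at k
    have himp : ∀ e ∈ w.edges,
        (fun e => decide (φ' e = k)) e = true → (fun e => decide (φ e = k)) e = true := by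
      intro e he hp
      simp only [decide_eq_true_eq] at hp ⊢
      rcases lt_or_eq_of_le (hsub e he) with h' | h'
      · exact absurd (hp ▸ hmaxle e he h') (not_le.mpr (hp ▸ h'))
      · rw [← h', hp]
    obtain ⟨a, b, hab⟩ := List.append_of_mem he₁
    have ha : ∀ e ∈ a, (fun e => decide (φ' e = k)) e = true →
        (fun e => decide (φ e = k)) e = true := fun e he =>
      himp e (by rw [hab]; exact List.mem_append_left _ he)
    have hb : ∀ e ∈ b, (fun e => decide (φ' e = k)) e = true →
        (fun e => decide (φ e = k)) e = true := fun e he =>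
      himp e (by rw [hab]; exact List.mem_append_right _ (List.mem_cons_of_mem _ he))
    have hQ : φ e₁ = k := hke
    have hP : ¬ (φ' e₁ = k) := fun hc => absurd (hc ▸ hlt₁) (by rw [hQ]; exact lt_irrefl k ∘ (hc ▸ ·))
    simp only [theta, hab, List.countP_append, List.countP_cons]
    have h1 := List.countP_mono_left ha
    have h2 := List.countP_mono_left hb
    simp only [decide_eq_true_eq, hQ, hP, if_true, if_false]
    omega
  · -- equality above k
    intro j hj
    simp only [theta]
    apply List.countP_congr
    intro e he
    simp only [decide_eq_true_eq]
    constructor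
    · intro hp
      rcases lt_or_eq_of_le (hsub e he) with h' | h'
      · exact absurd hp (h'.trans_le ((hmaxle e he h').trans hj.le)).ne
      · rw [← h', hp]
    · intro hp
      rcases lt_or_eq_of_le (hsub e he) with h' | h'
      · exact absurd hp ((hmaxle e he h').trans_lt hj).ne
      · rw [h', hp]
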